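/- Let g be a unitary automorphism of a hermitian space (V, h) over (E, σ) with characteristic polynomial Π_{i=1}^ℓ P_i^{a_i}, the P_i distinct monic irreducible, and set V_i = ker P_i^{a_i}(g) (the generalized eigenspace decomposition V = ⊕_i V_i). If P_j ≠ P_i*, then V_i and V_j are orthogonal: h(V_i, V_j) = 0. -/

import Mathlib

/-- `P*`: for monic `P` with nonzero constant term `b_d`, `P*(T) = σ(b_d)⁻¹ T^d P^σ(T⁻¹)`. -/
noncomputable def pstar {k : Type*} [Field k] (σ : k →+* k) (P : Polynomial k) : Polynomial k :=
  Polynomial.C (σ (P.coeff 0))⁻¹ * (P.map σ).reverse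

open Polynomial

section PstarLemmas

variable {k : Type*} [Field k] (σ : k →+* k)

lemma sigma_ne_zero {c : k} (hc : c ≠ 0) : σ c ≠ 0 := fun hh =>
  hc (σ.injective (by rw [hh, map_zero]))

lemma reverse_map_comm (p : k[X]) : (p.map σ).reverse = p.reverse.map σ := by
  unfold Polynomial.reverse
  rw [natDegree_map σ, reflect_map]

lemma reverse_reverse_of_ne {p : k[X]} (h0 : p.coeff 0 ≠ 0) : p.reverse.reverse = p := by
  have ht : p.natTrailingDegree = 0 := natTrailingDegree_eq_zero.mpr (Or.inr h0)
  have hd : p.reverse.natDegree = p.natDegree := by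
    rw [reverse_natDegree, ht, Nat.sub_zero]
  ext n
  rw [coeff_reverse, hd, coeff_reverse, revAt_invol]

lemma reverse_C_mul' {c : k} (hc : c ≠ 0) (p : k[X]) :
    (Polynomial.C c * p).reverse = Polynomial.C c * p.reverse := by
  unfold Polynomial.reverse
  rw [natDegree_C_mul hc, reflect_C_mul]

lemma pstar_mul (p q : k[X]) : pstar σ (p * q) = pstar σ p * pstar σ q := by
  unfold pstar
  rw [mul_coeff_zero, map_mul σ, mul_inv, Polynomial.map_mul, reverse_mul_of_domain, C_mul]
  ring

lemma pstar_coeff_zero {p : k[X]} (hp : p.Monic) :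
    (pstar σ p).coeff 0 = (σ (p.coeff 0))⁻¹ := by
  rw [pstar, coeff_C_mul, coeff_zero_reverse, Monic.leadingCoeff (hp.map σ), mul_one]

lemma pstar_natDegree {p : k[X]} (h0 : p.coeff 0 ≠ 0) :
    (pstar σ p).natDegree = p.natDegree := by
  have hσ0 : σ (p.coeff 0) ≠ 0 := sigma_ne_zero σ h0
  have ht : (p.map σ).natTrailingDegree = 0 :=
    natTrailingDegree_eq_zero.mpr (Or.inr (by rwa [coeff_map]))
  rw [pstar, natDegree_C_mul (inv_ne_zero hσ0), reverse_natDegree, ht, Nat.sub_zero,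
    natDegree_map]

lemma pstar_monic {p : k[X]} (hp : p.Monic) (h0 : p.coeff 0 ≠ 0) : (pstar σ p).Monic := by
  have hσ0 : σ (p.coeff 0) ≠ 0 := sigma_ne_zero σ h0
  have ht : (p.map σ).natTrailingDegree = 0 :=
    natTrailingDegree_eq_zero.mpr (Or.inr (by rwa [coeff_map]))
  unfold Polynomial.Monic
  rw [pstar, leadingCoeff_mul, leadingCoeff_C, reverse_leadingCoeff, trailingCoeff, ht,
    coeff_map, inv_mul_cancel₀ hσ0]

variable (hσ : ∀ x, σ (σ x) = x)
include hσ

lemma map_map_sigma (p : k[X]) : (p.map σ).map σ = p := by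
  rw [map_map]
  have : σ.comp σ = RingHom.id k := RingHom.ext hσ
  rw [this, map_id]

lemma pstar_pstar {p : k[X]} (hp : p.Monic) (h0 : p.coeff 0 ≠ 0) :
    pstar σ (pstar σ p) = p := by
  set c : k := (σ (p.coeff 0))⁻¹ with hc
  have hc0 : c ≠ 0 := inv_ne_zero (sigma_ne_zero σ h0)
  have hσc : σ c ≠ 0 := sigma_ne_zero σ hc0
  have hmap : (pstar σ p).map σ = Polynomial.C (σ c) * p.reverse := by
    rw [pstar, Polynomial.map_mul, map_C, reverse_map_comm, ← hc]
    congr 1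
    exact map_map_sigma σ hσ p.reverse
  rw [show pstar σ (pstar σ p) =
      Polynomial.C (σ ((pstar σ p).coeff 0))⁻¹ * ((pstar σ p).map σ).reverse from rfl,
    pstar_coeff_zero σ hp, hmap, reverse_C_mul' hσc, reverse_reverse_of_ne h0, ← hc,
    ← mul_assoc, ← C_mul, inv_mul_cancel₀ hσc, C_1, one_mul]

lemma pstar_irreducible {p : k[X]} (hp : p.Monic) (h0 : p.coeff 0 ≠ 0)
    (hirr : Irreducible p) : Irreducible (pstar σ p) := by
  have hd0 : p.natDegree ≠ 0 := by
    intro hd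
    exact hirr.not_isUnit (by rw [hp.natDegree_eq_zero.mp hd]; exact isUnit_one)
  constructor
  · intro hu
    exact hd0 (by rw [← pstar_natDegree σ h0]; exact natDegree_eq_zero_of_isUnit hu)
  · intro q r hqr
    have hps0 : (pstar σ p).coeff 0 = (σ (p.coeff 0))⁻¹ := pstar_coeff_zero σ hp
    have hqr0 : q.coeff 0 * r.coeff 0 ≠ 0 := by
      rw [← mul_coeff_zero, ← hqr, hps0]
      exact inv_ne_zero (sigma_ne_zero σ h0)
    have hq0 : q.coeff 0 ≠ 0 := fun hh => hqr0 (by rw [hh, zero_mul])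
    have hr0 : r.coeff 0 ≠ 0 := fun hh => hqr0 (by rw [hh, mul_zero])
    have hpp : p = pstar σ q * pstar σ r := by
      rw [← pstar_mul, ← hqr, pstar_pstar σ hσ hp h0]
    rcases hirr.isUnit_or_isUnit hpp with hu | hu
    · left
      have : q.natDegree = 0 := by
        rw [← pstar_natDegree σ hq0]; exact natDegree_eq_zero_of_isUnit hu
      rw [eq_C_of_natDegree_eq_zero this]
      exact isUnit_C.mpr (isUnit_iff_ne_zero.mpr hq0)
    · right
      have : r.natDegree = 0 := by
        rw [← pstar_natDegree σ hr0]; exact natDegree_eq_zero_of_isUnit hu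
      rw [eq_C_of_natDegree_eq_zero this]
      exact isUnit_C.mpr (isUnit_iff_ne_zero.mpr hr0)

end PstarLemmas

/-- Let `g` be unitary with characteristic polynomial `Π P_i^{a_i}` and
`V_i = ker P_i^{a_i}(g)`. If `P_j ≠ P_i*`, then `h(V_i, V_j) = 0`. -/
theorem stmt9 {E : Type*} [Field E] (σ : E →+* E) (hσ : ∀ x, σ (σ x) = x)
    {V : Type*} [AddCommGroup V] [Module E V] [FiniteDimensional E V]
    (h : V →ₗ[E] V →ₛₗ[σ] E)
    (h_herm : ∀ x y : V, h y x = σ (h x y))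
    (h_nondeg : ∀ x : V, (∀ y : V, h x y = 0) → x = 0)
    (g : V ≃ₗ[E] V) (hg : ∀ x y : V, h (g x) (g y) = h x y)
    (ℓ : ℕ) (P : Fin ℓ → Polynomial E) (a : Fin ℓ → ℕ)
    (hPmonic : ∀ i, (P i).Monic) (hPirr : ∀ i, Irreducible (P i))
    (hPinj : Function.Injective P) (hapos : ∀ i, 0 < a i)
    (hfac : LinearMap.charpoly g.toLinearMap = ∏ i, P i ^ a i)
    (i j : Fin ℓ) (hij : P j ≠ pstar σ (P i)) :
    ∀ x ∈ LinearMap.ker (Polynomial.aeval g.toLinearMap (P i ^ a i)),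
      ∀ y ∈ LinearMap.ker (Polynomial.aeval g.toLinearMap (P j ^ a j)),
        h x y = 0 := by
  intro x hx y hy
  set f : Module.End E V := g.toLinearMap with hfdef
  set s : Module.End E V := g.symm.toLinearMap with hsdef
  have hfs : f * s = 1 := by
    ext v; exact g.apply_symm_apply v
  have hsf : s * f = 1 := by
    ext v; exact g.symm_apply_apply v
  have hcomm : Commute f s := by
    show f * s = s * f
    rw [hfs, hsf]
  -- constant coefficient of `P i` is nonzero
  have hb0 : (P i).coeff 0 ≠ 0 := by
    have hdet : LinearMap.det f ≠ 0 := (LinearEquiv.isUnit_det' g).ne_zero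
    have hcp0 : (LinearMap.charpoly f).coeff 0 ≠ 0 := by
      intro hc
      rw [LinearMap.det_eq_sign_charpoly_coeff, hc, mul_zero] at hdet
      exact hdet rfl
    rw [hfac, coeff_zero_eq_eval_zero, eval_prod] at hcp0
    have := Finset.prod_ne_zero_iff.mp hcp0 i (Finset.mem_univ i)
    rw [eval_pow] at this
    intro hc
    rw [coeff_zero_eq_eval_zero] at hc
    exact this (by rw [hc, zero_pow (hapos i).ne'])
  have hσb0 : σ ((P i).coeff 0) ≠ 0 := sigma_ne_zero σ hb0
  -- adjunction
  have h1 : ∀ x y : V, h (f x) y = h x (s y) := by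
    intro x y
    have := hg x (g.symm y)
    rwa [g.apply_symm_apply] at this
  have h2 : ∀ (n : ℕ) (x y : V), h ((f ^ n) x) y = h x ((s ^ n) y) := by
    intro n
    induction n with
    | zero => intro x y; simp
    | succ n ih =>
      intro x y
      rw [pow_succ f, pow_succ' s]
      have hl : (f ^ n * f) x = (f ^ n) (f x) := rfl
      have hr : (s * s ^ n) y = s ((s ^ n) y) := rfl
      rw [hl, hr, ih (f x) y, h1]
  have adj : ∀ (Q : Polynomial E) (x y : V),
      h ((Polynomial.aeval f Q) x) y = h x ((Polynomial.aeval s (Q.map σ)) y) := by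
    intro Q
    induction Q using Polynomial.induction_on' with
    | add p q hp hq =>
      intro x y
      rw [Polynomial.map_add, map_add, map_add, LinearMap.add_apply, LinearMap.add_apply,
        map_add, LinearMap.add_apply, map_add, hp, hq]
    | monomial n c =>
      intro x y
      rw [Polynomial.map_monomial, aeval_monomial, aeval_monomial, Module.End.mul_apply,
        Module.End.mul_apply, Module.algebraMap_end_apply, Module.algebraMap_end_apply,
        map_smul, LinearMap.smul_apply, (h x).map_smulₛₗ, hσ, h2 n x y, smul_eq_mul]
  -- reverse identity
  have rev : ∀ R : Polynomial E,
      Polynomial.aeval f R.reverse * s ^ R.natDegree = Polynomial.aeval s R := by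
    intro R
    have hR : R.natDegree < R.natDegree + 1 := Nat.lt_succ_self _
    have hRr : R.reverse.natDegree < R.natDegree + 1 :=
      Nat.lt_succ_of_le (reverse_natDegree_le R)
    rw [aeval_eq_sum_range' hRr, aeval_eq_sum_range' hR, Finset.sum_mul,
      ← Finset.sum_range_reflect]
    apply Finset.sum_congr rfl
    intro m hm
    have hm' : m ≤ R.natDegree := Nat.lt_succ_iff.mp (Finset.mem_range.mp hm)
    rw [Nat.add_sub_cancel, coeff_reverse, revAt_le (Nat.sub_le _ _), Nat.sub_sub_self hm',
      smul_mul_assoc]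
    congr 1
    have hk : R.natDegree - m ≤ R.natDegree := Nat.sub_le _ _
    calc f ^ (R.natDegree - m) * s ^ R.natDegree
        = f ^ (R.natDegree - m) * (s ^ (R.natDegree - m) * s ^ (R.natDegree - (R.natDegree - m))) := by
          rw [← pow_add, Nat.add_sub_cancel' hk]
      _ = (f ^ (R.natDegree - m) * s ^ (R.natDegree - m)) * s ^ (R.natDegree - (R.natDegree - m)) := by
          rw [mul_assoc]
      _ = s ^ (R.natDegree - (R.natDegree - m)) := by rw [← hcomm.mul_pow, hfs, one_pow, one_mul]
      _ = s ^ m := by rw [Nat.sub_sub_self hm']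
  -- aeval at f commutes with s
  have hcomm_aeval : ∀ R : Polynomial E, Commute (Polynomial.aeval f R) s := by
    intro R
    rw [aeval_eq_sum_range (p := R) f]
    apply Commute.sum_left
    intro m _
    exact (hcomm.pow_left m).smul_left _
  set A : Module.End E V := Polynomial.aeval f (pstar σ (P i)) with hAdef
  set d : ℕ := ((P i).map σ).natDegree with hddef
  -- key operator identity
  have hrevPi : ((P i).map σ).reverse = Polynomial.C (σ ((P i).coeff 0)) * pstar σ (P i) := by
    rw [pstar, ← mul_assoc, ← C_mul, mul_inv_cancel₀ hσb0, C_1, one_mul]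
  have hkey : Polynomial.aeval s ((P i).map σ) =
      algebraMap E (Module.End E V) (σ ((P i).coeff 0)) * A * s ^ d := by
    rw [← rev ((P i).map σ), hrevPi, map_mul, aeval_C]
  -- claim 1
  have claim1 : ∀ z : V,
      h x ((Polynomial.aeval f ((pstar σ (P i)) ^ a i)) z) = 0 := by
    intro z
    set c : E := (σ ((P i).coeff 0)) ^ a i with hcdef
    have hc0 : c ≠ 0 := pow_ne_zero _ hσb0
    set D : ℕ := d * a i with hDdef
    set w : V := (f ^ D) z with hwdef
    have hsw : (s ^ D) w = z := by
      have hone : s ^ D * f ^ D = 1 := by rw [← hcomm.symm.mul_pow, hsf, one_pow]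
      have := LinearMap.ext_iff.mp hone z
      simpa using this
    have hop : Polynomial.aeval s (((P i) ^ a i).map σ) =
        algebraMap E (Module.End E V) c * (Polynomial.aeval f ((pstar σ (P i)) ^ a i) * s ^ D) := by
      rw [Polynomial.map_pow, map_pow, hkey]
      have hcA : Commute (algebraMap E (Module.End E V) (σ ((P i).coeff 0))) (A * s ^ d) :=
        (Algebra.commutes _ _)
      rw [mul_assoc, hcA.mul_pow, ((hcomm_aeval _).pow_right d).mul_pow, ← pow_mul,
        ← map_pow (algebraMap E (Module.End E V)) (σ ((P i).coeff 0)) (a i),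
        ← map_pow (Polynomial.aeval f) (pstar σ (P i)) (a i), ← hcdef, ← hDdef]
    have h0' : (Polynomial.aeval f ((P i) ^ a i)) x = 0 := LinearMap.mem_ker.mp hx
    have := adj ((P i) ^ a i) x w
    rw [h0', map_zero, LinearMap.zero_apply, hop] at this
    rw [Module.End.mul_apply, Module.End.mul_apply, hsw, Module.algebraMap_end_apply,
      (h x).map_smulₛₗ, smul_eq_mul] at this
    have hσc : σ c ≠ 0 := sigma_ne_zero σ hc0
    exact (mul_eq_zero.mp this.symm).resolve_left hσc
  -- coprimality
  have hstar_irr : Irreducible (pstar σ (P i)) :=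
    pstar_irreducible σ hσ (hPmonic i) hb0 (hPirr i)
  have hstar_monic : (pstar σ (P i)).Monic := pstar_monic σ (hPmonic i) hb0
  have hnd : ¬ (P j ∣ pstar σ (P i)) := by
    intro hd
    exact hij (Polynomial.eq_of_monic_of_associated (hPmonic j) hstar_monic
      ((hPirr j).associated_of_dvd hstar_irr hd))
  have hcop : IsCoprime ((P j) ^ a j) ((pstar σ (P i)) ^ a i) :=
    ((EuclideanDomain.dvd_or_coprime _ _ (hPirr j)).resolve_left hnd).pow
  obtain ⟨u, v, huv⟩ := hcop
  have hone : Polynomial.aeval f (u * (P j) ^ a j + v * (pstar σ (P i)) ^ a i) = 1 := by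
    rw [huv, map_one]
  have hy0 : (Polynomial.aeval f ((P j) ^ a j)) y = 0 := LinearMap.mem_ker.mp hy
  have hy2 : y = (Polynomial.aeval f ((pstar σ (P i)) ^ a i)) ((Polynomial.aeval f v) y) := by
    have := LinearMap.ext_iff.mp hone y
    rw [map_add, LinearMap.add_apply, map_mul, Module.End.mul_apply, hy0, map_zero,
      zero_add, mul_comm v, map_mul, Module.End.mul_apply, Module.End.one_apply] at this
    exact this.symm
  rw [hy2]
  exact claim1 _
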